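/- Let G be a countable left-orderable group. Then there exists an injective group homomorphism h : G → Homeo₊(ℝ) such that: (a) h(g)(0) = 0 for every g ∈ G; and (b) for every g ≠ e in G, the germ of h(g) at 0 is nontrivial, i.e. there is no neighborhood of 0 on which h(g) restricts to the identity. -/

import Mathlib

open Filter Topology Set

def HomeoPlusReal : Subgroup (Equiv.Perm ℝ) where
  carrier := {f | Continuous f ∧ Continuous f.symm ∧ StrictMono f}
  one_mem' := by
    refine ⟨continuous_id, ?_, fun a b h => h⟩
    exact continuous_id
  mul_mem' := by
    rintro a b ⟨ha1, ha2, ha3⟩ ⟨hb1, hb2, hb3⟩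
    refine ⟨?_, ?_, ?_⟩
    · simpa [Equiv.Perm.coe_mul] using ha1.comp hb1
    · have : Continuous (⇑b.symm ∘ ⇑a.symm) := hb2.comp ha2
      simpa [Equiv.Perm.mul_def, Equiv.symm_trans_apply, Function.comp] using this
    · intro x y h
      simpa [Equiv.Perm.coe_mul] using ha3 (hb3 h)
  inv_mem' := by
    rintro a ⟨ha1, ha2, ha3⟩
    refine ⟨by simpa using ha2, by exact ha1, ?_⟩
    intro x y h
    have h2 := ha3.lt_iff_lt (a := a.symm x) (b := a.symm y)
    simp only [Equiv.apply_symm_apply] at h2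
    simpa using h2.mp h

/-- A group is left-orderable if it admits a linear order invariant under
left multiplication: `g ≺ h` implies `f * g ≺ f * h`. -/
def IsLeftOrderable (G : Type*) [Group G] : Prop :=
  ∃ r : LinearOrder G, ∀ f g h : G, r.lt g h → r.lt (f * g) (f * h)

/-! ### Auxiliary constructions -/

namespace LOAux

/-- The canonical monotone extension of an order isomorphism of `ℚ` to `ℝ`. -/
noncomputable def qext (f : ℚ ≃o ℚ) : ℝ → ℝ :=
  fun x => sSup ((fun q : ℚ => ((f q : ℚ) : ℝ)) '' {q : ℚ | (q : ℝ) ≤ x})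

lemma qext_set_nonempty (f : ℚ ≃o ℚ) (x : ℝ) :
    ((fun q : ℚ => ((f q : ℚ) : ℝ)) '' {q : ℚ | (q : ℝ) ≤ x}).Nonempty := by
  obtain ⟨q, hq⟩ := exists_rat_lt x
  exact ⟨_, ⟨q, hq.le, rfl⟩⟩

lemma qext_bddAbove (f : ℚ ≃o ℚ) (x : ℝ) :
    BddAbove ((fun q : ℚ => ((f q : ℚ) : ℝ)) '' {q : ℚ | (q : ℝ) ≤ x}) := by
  obtain ⟨r, hr⟩ := exists_rat_gt x
  refine ⟨((f r : ℚ) : ℝ), ?_⟩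
  rintro _ ⟨q, hq, rfl⟩
  have hqr : q < r := by exact_mod_cast lt_of_le_of_lt hq hr
  show ((f q : ℚ) : ℝ) ≤ ((f r : ℚ) : ℝ)
  exact_mod_cast (f.strictMono hqr).le

lemma qext_rat (f : ℚ ≃o ℚ) (q : ℚ) : qext f (q : ℝ) = ((f q : ℚ) : ℝ) := by
  refine le_antisymm (csSup_le (qext_set_nonempty f q) ?_)
    (le_csSup (qext_bddAbove f q) ⟨q, show ((q:ℝ) ≤ (q:ℝ)) from le_rfl, rfl⟩)
  rintro _ ⟨p, hp, rfl⟩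
  have hpq : p ≤ q := by exact_mod_cast hp
  show ((f p : ℚ) : ℝ) ≤ ((f q : ℚ) : ℝ)
  exact_mod_cast f.monotone hpq

lemma qext_strictMono (f : ℚ ≃o ℚ) : StrictMono (qext f) := by
  intro x y hxy
  obtain ⟨q1, hq1, hq1'⟩ := exists_rat_btwn hxy
  obtain ⟨q2, hq2, hq2'⟩ := exists_rat_btwn hq1'
  have h1 : qext f x ≤ ((f q1 : ℚ) : ℝ) := by
    refine csSup_le (qext_set_nonempty f x) ?_
    rintro _ ⟨p, hp, rfl⟩
    have hpq : p ≤ q1 := by exact_mod_cast (lt_of_le_of_lt hp hq1).le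
    show ((f p : ℚ) : ℝ) ≤ ((f q1 : ℚ) : ℝ)
    exact_mod_cast f.monotone hpq
  have h2 : ((f q2 : ℚ) : ℝ) ≤ qext f y :=
    le_csSup (qext_bddAbove f y) ⟨q2, hq2'.le, rfl⟩
  have h12 : ((f q1 : ℚ) : ℝ) < ((f q2 : ℚ) : ℝ) := by
    have hq : q1 < q2 := by exact_mod_cast hq2
    exact_mod_cast f.strictMono hq
  exact h1.trans_lt (h12.trans_le h2)

lemma qext_rightInverse (f : ℚ ≃o ℚ) (y : ℝ) : qext f (qext f.symm y) = y := by
  set x := qext f.symm y with hx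
  refine le_antisymm ?_ ?_
  · refine csSup_le (qext_set_nonempty f x) ?_
    rintro _ ⟨q, hq, rfl⟩
    by_contra hlt
    push_neg at hlt
    obtain ⟨s, hs1, hs2⟩ := exists_rat_btwn hlt
    have hs2' : s < f q := by exact_mod_cast hs2
    have hq1lt : f.symm s < q := by
      have := f.symm.strictMono hs2'
      simpa using this
    have hxle : x ≤ ((f.symm s : ℚ) : ℝ) := by
      rw [hx]
      refine csSup_le (qext_set_nonempty f.symm y) ?_
      rintro _ ⟨p, hp, rfl⟩
      have hps : p < s := by exact_mod_cast lt_of_le_of_lt hp hs1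
      show ((f.symm p : ℚ) : ℝ) ≤ ((f.symm s : ℚ) : ℝ)
      exact_mod_cast f.symm.monotone hps.le
    have h1 : (q : ℝ) ≤ ((f.symm s : ℚ) : ℝ) := le_trans hq hxle
    have h2 : q ≤ f.symm s := by exact_mod_cast h1
    exact absurd hq1lt (not_lt.mpr h2)
  · refine le_of_forall_lt fun c hc => ?_
    obtain ⟨t, ht1, ht2⟩ := exists_rat_btwn hc
    have h1 : ((f.symm t : ℚ) : ℝ) ≤ x :=
      le_csSup (qext_bddAbove f.symm y) ⟨t, ht2.le, rfl⟩
    have h2 : ((t : ℚ) : ℝ) ≤ qext f x := by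
      have := le_csSup (qext_bddAbove f x) (⟨f.symm t, h1, rfl⟩ :
        ((f (f.symm t) : ℚ) : ℝ) ∈ (fun q : ℚ => ((f q : ℚ) : ℝ)) '' {q : ℚ | (q : ℝ) ≤ x})
      simp only [OrderIso.apply_symm_apply] at this
      exact this
    exact lt_of_lt_of_le ht1 h2

lemma qext_leftInverse (f : ℚ ≃o ℚ) (x : ℝ) : qext f.symm (qext f x) = x := by
  simpa using qext_rightInverse f.symm x

lemma qext_surjective (f : ℚ ≃o ℚ) : Function.Surjective (qext f) :=
  fun y => ⟨qext f.symm y, qext_rightInverse f y⟩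

/-- `qext f` as an order isomorphism of `ℝ`. -/
noncomputable def qiso (f : ℚ ≃o ℚ) : ℝ ≃o ℝ :=
  StrictMono.orderIsoOfSurjective (qext f) (qext_strictMono f) (qext_surjective f)

lemma qext_continuous (f : ℚ ≃o ℚ) : Continuous (qext f) := by
  have := (qiso f).continuous
  simpa only [qiso, StrictMono.coe_orderIsoOfSurjective] using this

lemma qext_comp (f g : ℚ ≃o ℚ) : qext g ∘ qext f = qext (f.trans g) := by
  refine Rat.denseRange_cast.equalizer ((qext_continuous g).comp (qext_continuous f))
    (qext_continuous (f.trans g)) ?_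
  funext q
  simp [Function.comp, qext_rat]

lemma qext_id : qext (OrderIso.refl ℚ) = id := by
  refine Rat.denseRange_cast.equalizer (qext_continuous _) continuous_id ?_
  funext q
  simp [Function.comp, qext_rat]

/-- The homeomorphism of `ℝ` obtained by conjugating `qext f` into `(0, ∞)` via
`exp`/`log`, and extending by the identity on `(-∞, 0]`. -/
noncomputable def pext (f : ℚ ≃o ℚ) : ℝ → ℝ := fun x =>
  if x ≤ 0 then x else Real.exp (qext f (Real.log x))

lemma pext_strictMono (f : ℚ ≃o ℚ) : StrictMono (pext f) := by
  intro x y hxy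
  unfold pext
  by_cases hy : y ≤ 0
  · rw [if_pos (hxy.le.trans hy), if_pos hy]; exact hxy
  · rw [if_neg hy]
    by_cases hx : x ≤ 0
    · rw [if_pos hx]; exact lt_of_le_of_lt hx (Real.exp_pos _)
    · rw [if_neg hx]
      exact Real.exp_lt_exp.mpr ((qext_strictMono f) (Real.log_lt_log (not_le.mp hx) hxy))

lemma pext_inv (f : ℚ ≃o ℚ) (x : ℝ) : pext f.symm (pext f x) = x := by
  unfold pext
  by_cases hx : x ≤ 0
  · rw [if_pos hx, if_pos hx]
  · rw [if_neg hx, if_neg (not_le.mpr (Real.exp_pos _)), Real.log_exp, qext_leftInverse,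
      Real.exp_log (not_le.mp hx)]

lemma pext_surjective (f : ℚ ≃o ℚ) : Function.Surjective (pext f) := by
  intro y
  refine ⟨pext f.symm y, ?_⟩
  have := pext_inv f.symm y
  simpa using this

/-- `pext f` as an order isomorphism of `ℝ`. -/
noncomputable def piso (f : ℚ ≃o ℚ) : ℝ ≃o ℝ :=
  StrictMono.orderIsoOfSurjective (pext f) (pext_strictMono f) (pext_surjective f)

/-- `pext f` as an element of `HomeoPlusReal`. -/
noncomputable def homeoOf (f : ℚ ≃o ℚ) : HomeoPlusReal :=
  ⟨(piso f).toEquiv, (piso f).continuous, (piso f).symm.continuous, (piso f).strictMono⟩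

lemma homeoOf_apply (f : ℚ ≃o ℚ) (x : ℝ) : ((homeoOf f : Equiv.Perm ℝ)) x = pext f x := rfl

lemma homeoOf_mul (f g : ℚ ≃o ℚ) : homeoOf (f.trans g) = homeoOf g * homeoOf f := by
  refine Subtype.ext (Equiv.ext fun x => ?_)
  have hrhs : ((homeoOf g * homeoOf f : HomeoPlusReal) : Equiv.Perm ℝ) x
      = pext g (pext f x) := rfl
  have hlhs : ((homeoOf (f.trans g) : HomeoPlusReal) : Equiv.Perm ℝ) x
      = pext (f.trans g) x := rfl
  rw [hlhs, hrhs]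
  unfold pext
  by_cases hx : x ≤ 0
  · rw [if_pos hx, if_pos hx, if_pos hx]
  · rw [if_neg hx, if_neg hx, if_neg (not_le.mpr (Real.exp_pos _)), Real.log_exp, ← qext_comp]
    rfl

/-- A lexicographic product is densely ordered whenever the second factor is densely
ordered and has no maximal element. -/
lemma lex_denselyOrdered {α β : Type*} [LinearOrder α] [Preorder β] [DenselyOrdered β]
    [NoMaxOrder β] : DenselyOrdered (α ×ₗ β) := by
  constructor
  intro x y h
  rcases Prod.Lex.lt_iff.mp h with h1 | ⟨h1, h2⟩
  · obtain ⟨c, hc⟩ := exists_gt (ofLex x).2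
    exact ⟨toLex ((ofLex x).1, c), Prod.Lex.lt_iff.mpr (Or.inr ⟨rfl, hc⟩),
      Prod.Lex.lt_iff.mpr (Or.inl h1)⟩
  · obtain ⟨c, hc1, hc2⟩ := exists_between h2
    exact ⟨toLex ((ofLex x).1, c), Prod.Lex.lt_iff.mpr (Or.inr ⟨rfl, hc1⟩),
      Prod.Lex.lt_iff.mpr (Or.inr ⟨h1, hc2⟩)⟩

section Action

variable {G : Type*} [Group G] [LinearOrder G]

/-- Left translation of `G` acting on the middle coordinate of `ℚ ×ₗ (G ×ₗ ℚ)`. -/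
def Tfun (g : G) (p : ℚ ×ₗ (G ×ₗ ℚ)) : ℚ ×ₗ (G ×ₗ ℚ) :=
  toLex ((ofLex p).1, toLex (g * (ofLex (ofLex p).2).1, (ofLex (ofLex p).2).2))

lemma Tfun_comp (g₁ g₂ : G) (p : ℚ ×ₗ (G ×ₗ ℚ)) :
    Tfun g₁ (Tfun g₂ p) = Tfun (g₁ * g₂) p := by
  simp [Tfun, mul_assoc]

lemma Tfun_id (p : ℚ ×ₗ (G ×ₗ ℚ)) : Tfun (1 : G) p = p := by
  simp [Tfun]

lemma Tfun_strictMono (hr : ∀ f g h : G, g < h → f * g < f * h) (g : G) :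
    StrictMono (Tfun (G := G) g) := by
  intro p q h
  rcases Prod.Lex.lt_iff.mp h with h1 | ⟨h1, h2⟩
  · exact Prod.Lex.lt_iff.mpr (Or.inl h1)
  · rcases Prod.Lex.lt_iff.mp h2 with h3 | ⟨h3, h4⟩
    · exact Prod.Lex.lt_iff.mpr (Or.inr ⟨h1,
        Prod.Lex.lt_iff.mpr (Or.inl (hr g _ _ h3))⟩)
    · exact Prod.Lex.lt_iff.mpr (Or.inr ⟨h1,
        Prod.Lex.lt_iff.mpr (Or.inr ⟨by show g * (ofLex (ofLex p).2).1 = g * (ofLex (ofLex q).2).1; rw [h3], h4⟩)⟩)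

lemma Tfun_surjective (g : G) : Function.Surjective (Tfun (G := G) g) := by
  intro p
  refine ⟨Tfun g⁻¹ p, ?_⟩
  rw [Tfun_comp, mul_inv_cancel, Tfun_id]

end Action

end LOAux

open LOAux in
/-- A countable left-orderable group admits a faithful action on `ℝ` by
orientation-preserving homeomorphisms such that every element fixes `0`, and
every nonidentity element has nontrivial germ at `0` (there is no neighborhood
of `0` on which it restricts to the identity). -/
theorem exists_faithful_action_fixing_zero_nontrivial_germ {G : Type*} [Group G]
    [Countable G] (hG : IsLeftOrderable G) :
    ∃ h : G →* HomeoPlusReal, Function.Injective h ∧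
      (∀ g : G, ((h g : Equiv.Perm ℝ)) 0 = 0) ∧
      (∀ g : G, g ≠ 1 → ∀ u ∈ nhds (0 : ℝ), ∃ x ∈ u, ((h g : Equiv.Perm ℝ)) x ≠ x) := by
  obtain ⟨r, hr⟩ := hG
  letI : LinearOrder G := r
  have hr' : ∀ f g h : G, g < h → f * g < f * h := hr
  -- the countable dense linear order acted on by `G`
  haveI : Countable (ℚ ×ₗ (G ×ₗ ℚ)) := by
    exact inferInstanceAs (Countable (ℚ × (G × ℚ)))
  haveI : Nonempty (ℚ ×ₗ (G ×ₗ ℚ)) := by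
    exact inferInstanceAs (Nonempty (ℚ × (G × ℚ)))
  haveI : DenselyOrdered (G ×ₗ ℚ) := lex_denselyOrdered
  haveI : DenselyOrdered (ℚ ×ₗ (G ×ₗ ℚ)) := lex_denselyOrdered
  obtain ⟨eiso⟩ := Order.iso_of_countable_dense (α := ℚ ×ₗ (G ×ₗ ℚ)) (β := ℚ)
  -- the induced action on ℚ
  let Tiso : G → (ℚ ×ₗ (G ×ₗ ℚ)) ≃o (ℚ ×ₗ (G ×ₗ ℚ)) := fun g =>
    StrictMono.orderIsoOfSurjective (Tfun g) (Tfun_strictMono hr' g) (Tfun_surjective g)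
  let φ : G → ℚ ≃o ℚ := fun g => (eiso.symm.trans (Tiso g)).trans eiso
  have hφ_apply : ∀ (g : G) (q : ℚ), φ g q = eiso (Tfun g (eiso.symm q)) := fun g q => rfl
  have hφ_mul : ∀ g₁ g₂ : G, (φ g₂).trans (φ g₁) = φ (g₁ * g₂) := by
    intro g₁ g₂
    ext q
    simp only [OrderIso.trans_apply, hφ_apply, OrderIso.symm_apply_apply]
    rw [Tfun_comp]
  -- the homomorphism
  let hhom : G →* HomeoPlusReal := MonoidHom.mk' (fun g => homeoOf (φ g))
    (fun g₁ g₂ => by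
      show homeoOf (φ (g₁ * g₂)) = homeoOf (φ g₁) * homeoOf (φ g₂)
      rw [← hφ_mul g₁ g₂, homeoOf_mul])
  have happly : ∀ (g : G) (x : ℝ), ((hhom g : Equiv.Perm ℝ)) x = pext (φ g) x :=
    fun g x => rfl
  -- every element fixes 0
  have hfix : ∀ g : G, ((hhom g : Equiv.Perm ℝ)) 0 = 0 := by
    intro g
    rw [happly]
    unfold pext
    rw [if_pos le_rfl]
  -- nontrivial germ at 0
  have hgerm : ∀ g : G, g ≠ 1 → ∀ u ∈ nhds (0 : ℝ), ∃ x ∈ u,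
      ((hhom g : Equiv.Perm ℝ)) x ≠ x := by
    intro g hg u hu
    obtain ⟨ε, hε, hball⟩ := Metric.mem_nhds_iff.mp hu
    obtain ⟨M, hM⟩ := exists_rat_lt (Real.log ε)
    -- a point moved by `φ g` lying below `M`
    set p0 := eiso.symm M with hp0
    set y : ℚ ×ₗ (G ×ₗ ℚ) := toLex ((ofLex p0).1 - 1, toLex ((1 : G), (0 : ℚ))) with hy
    have hylt : y < p0 := by
      refine Prod.Lex.lt_iff.mpr (Or.inl ?_)
      exact sub_one_lt _
    set p : ℚ := eiso y with hp
    have hpM : p < M := by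
      have := eiso.strictMono hylt
      rwa [hp0, OrderIso.apply_symm_apply] at this
    have hmoved : φ g p ≠ p := by
      have h1 : φ g p = eiso (Tfun g y) := by
        rw [hφ_apply, hp, OrderIso.symm_apply_apply]
      rw [h1, hp]
      intro hEq
      have hTy : Tfun g y = y := eiso.injective hEq
      apply hg
      have := congrArg (fun z : ℚ ×ₗ (G ×ₗ ℚ) => (ofLex (ofLex z).2).1) hTy
      simpa [Tfun, hy] using this
    refine ⟨Real.exp (p : ℝ), ?_, ?_⟩
    · apply hball
      rw [Metric.mem_ball, Real.dist_eq, sub_zero, abs_of_pos (Real.exp_pos _)]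
      have hplog : (p : ℝ) < Real.log ε := lt_trans (by exact_mod_cast hpM) hM
      calc Real.exp (p : ℝ) < Real.exp (Real.log ε) := Real.exp_lt_exp.mpr hplog
        _ = ε := Real.exp_log hε
    · rw [happly]
      unfold pext
      rw [if_neg (not_le.mpr (Real.exp_pos _)), Real.log_exp, qext_rat]
      intro hEq
      have h2 : ((φ g p : ℚ) : ℝ) = ((p : ℚ) : ℝ) := Real.exp_injective hEq
      exact hmoved (by exact_mod_cast h2)
  -- injectivity
  have hinj : Function.Injective hhom := by
    refine (injective_iff_map_eq_one hhom).mpr ?_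
    intro g hg1
    by_contra hne
    obtain ⟨x, -, hx⟩ := hgerm g hne univ univ_mem
    apply hx
    rw [hg1]
    rfl
  exact ⟨hhom, hinj, hfix, hgerm⟩
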